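/- Let $n\geq 3$ and let $\mathcal{L}_S$ be the $n\times n$ matrix with diagonal $\frac{4}{3}$, super/sub-diagonal $-\frac{1}{3}$, and corners $+\frac{1}{3}$. All eigenvalues $\delta_1,\dots,\delta_n$ are positive and $\sum_{i=1}^{n}\frac{1}{\delta_i}=\frac{\sqrt{3}\,n}{2}\cdot\frac{(2+\sqrt{3})^{n}-(2-\sqrt{3})^{n}}{(2+\sqrt{3})^{n}+(2-\sqrt{3})^{n}+2}$. -/

import Mathlib

/-- The matrix `𝓛_S`: diagonal `4/3`, subdiagonal and superdiagonal `-1/3`,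
corner entries `+1/3` at positions `(1,n)` and `(n,1)`. -/
noncomputable def LSnorm (n : ℕ) : Matrix (Fin n) (Fin n) ℝ :=
  Matrix.of fun i j =>
    if i = j then 4 / 3
    else if i.val + 1 = j.val ∨ j.val + 1 = i.val then -(1 / 3)
    else if (i.val = 0 ∧ j.val = n - 1) ∨ (i.val = n - 1 ∧ j.val = 0) then 1 / 3
    else 0

namespace Stmt15Aux

open Matrix in
lemma _dummy : True := trivial

open scoped Matrix

noncomputable def q : ℝ := 2 - Real.sqrt 3

lemma sqrt3_sq : Real.sqrt 3 ^ 2 = 3 := Real.sq_sqrt (by norm_num)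

lemma one_lt_sqrt3 : 1 < Real.sqrt 3 := by
  nlinarith [sqrt3_sq, Real.sqrt_nonneg 3]

lemma sqrt3_lt_two : Real.sqrt 3 < 2 := by
  nlinarith [sqrt3_sq, Real.sqrt_nonneg 3]

lemma q_pos : 0 < q := by simp [q, sqrt3_lt_two]

lemma q_lt_one : q < 1 := by
  have := one_lt_sqrt3; simp [q]; linarith

lemma q_ne : q ≠ 0 := ne_of_gt q_pos

lemma q_mul : q * (2 + Real.sqrt 3) = 1 := by
  have := sqrt3_sq; simp only [q]; nlinarith

lemma q_inv : q⁻¹ = 2 + Real.sqrt 3 :=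
  inv_eq_of_mul_eq_one_right q_mul

lemma q_add_inv : q + q⁻¹ = 4 := by rw [q_inv]; simp [q]; ring

def Pm (n : ℕ) : Matrix (Fin n) (Fin n) ℝ :=
  Matrix.of fun i j => if (j : ℕ) = ((i : ℕ) + 1) % n then (if (i : ℕ) + 1 = n then -1 else 1) else 0

lemma Pm_pow (n k : ℕ) (hk : k ≤ n) :
    Pm n ^ k = Matrix.of (fun i j : Fin n =>
      if (j : ℕ) = ((i : ℕ) + k) % n then (if n ≤ (i : ℕ) + k then (-1:ℝ) else 1) else 0) := by
  induction k with
  | zero =>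
    ext i j
    simp only [pow_zero, Matrix.one_apply, Matrix.of_apply, Nat.add_zero,
      Nat.mod_eq_of_lt i.isLt, Fin.ext_iff]
    have : ¬ n ≤ (i : ℕ) := by omega
    simp [this, eq_comm]
  | succ k ih =>
    have hk' : k ≤ n := by omega
    have hn : 0 < n := by omega
    rw [pow_succ, ih hk']
    ext i j
    rw [Matrix.mul_apply]
    have hlt : ((i : ℕ) + k) % n < n := Nat.mod_lt _ hn
    rw [Finset.sum_eq_single (⟨((i : ℕ) + k) % n, hlt⟩ : Fin n)]
    · simp only [Matrix.of_apply, Pm, if_pos rfl]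
      have h2 : (((i : ℕ) + k) % n + 1) % n = ((i : ℕ) + k + 1) % n := Nat.mod_add_mod _ _ _
      by_cases hw : n ≤ (i : ℕ) + k
      · -- already wrapped once; i + k ≤ 2n - 2 < 2n
        have hik : (i : ℕ) + k < 2 * n := by omega
        have hv : ((i : ℕ) + k) % n = (i : ℕ) + k - n := by
          rw [Nat.mod_eq_sub_mod hw, Nat.mod_eq_of_lt (by omega)]
        have hns : ¬ (((i : ℕ) + k) % n + 1 = n) := by omega
        have hw' : n ≤ (i : ℕ) + (k + 1) := by omega
        simp only [hns, if_false, if_pos hw, mul_one, h2, ← Nat.add_assoc]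
        rw [if_pos (show n ≤ (i:ℕ)+k+1 by omega)]
        split_ifs <;> ring
      · have hv : ((i : ℕ) + k) % n = (i : ℕ) + k := Nat.mod_eq_of_lt (by omega)
        by_cases he : (i : ℕ) + k + 1 = n
        · have : ((i : ℕ) + k) % n + 1 = n := by omega
          have hw' : n ≤ (i : ℕ) + (k + 1) := by omega
          simp only [hw, if_false, this, if_pos, one_mul, h2, ← Nat.add_assoc]
          have hmm : n % n = ((i:ℕ)+k+1) % n := by rw [he]
          rw [hmm, if_pos (show n ≤ (i:ℕ)+k+1 by omega)]
        · have : ¬ (((i : ℕ) + k) % n + 1 = n) := by omega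
          have hw' : ¬ n ≤ (i : ℕ) + (k + 1) := by omega
          simp only [hw, this, if_false, h2, ← Nat.add_assoc, if_true, one_mul]
          rw [if_neg (show ¬ n ≤ (i:ℕ)+k+1 by omega)]
    · intro b _ hb
      have : (b : ℕ) ≠ ((i : ℕ) + k) % n := fun h => hb (Fin.ext h)
      simp [Matrix.of_apply, this]
    · intro h; exact absurd (Finset.mem_univ _) h


lemma Pm_pow_n (n : ℕ) (hn : 0 < n) : Pm n ^ n = -1 := by
  rw [Pm_pow n n le_rfl]
  ext i j
  have h1 : ((i : ℕ) + n) % n = (i : ℕ) := by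
    rw [Nat.add_mod_right, Nat.mod_eq_of_lt i.isLt]
  have h2 : n ≤ (i : ℕ) + n := by omega
  simp only [Matrix.of_apply, h1, if_pos h2, Matrix.neg_apply, Matrix.one_apply, Fin.ext_iff]
  by_cases h : (j : ℕ) = (i : ℕ)
  · simp [h]
  · rw [if_neg h, if_neg (fun hc : (i:ℕ) = (j:ℕ) => h hc.symm)]; simp

lemma trace_Pm_pow (n k : ℕ) (hk1 : 1 ≤ k) (hk : k < n) : ((Pm n) ^ k).trace = 0 := by
  rw [Pm_pow n k (le_of_lt hk)]
  rw [Matrix.trace]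
  apply Finset.sum_eq_zero
  intro i _
  simp only [Matrix.diag_apply, Matrix.of_apply]
  have hne : (i : ℕ) ≠ ((i : ℕ) + k) % n := by
    by_cases h : (i : ℕ) + k < n
    · rw [Nat.mod_eq_of_lt h]; omega
    · have : ((i : ℕ) + k) % n = (i : ℕ) + k - n := by
        rw [Nat.mod_eq_sub_mod (by omega), Nat.mod_eq_of_lt (by omega)]
      rw [this]; omega
  simp [hne]

lemma Pm_mul_transpose (n : ℕ) (hn : 0 < n) : Pm n * (Pm n)ᵀ = 1 := by
  ext i j
  rw [Matrix.mul_apply]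
  have hlt : ((i : ℕ) + 1) % n < n := Nat.mod_lt _ hn
  rw [Finset.sum_eq_single (⟨((i : ℕ) + 1) % n, hlt⟩ : Fin n)]
  · simp only [Matrix.transpose_apply, Pm, Matrix.of_apply, if_pos rfl]
    by_cases h : i = j
    · subst h
      simp only [if_pos rfl, Matrix.one_apply_eq]
      split_ifs <;> ring
    · have : ¬ (((i : ℕ) + 1) % n = ((j : ℕ) + 1) % n) := by
        intro hc
        apply h
        have hi := i.isLt; have hj := j.isLt
        apply Fin.ext
        by_cases h1 : (i:ℕ) + 1 < n <;> by_cases h2 : (j:ℕ) + 1 < n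
        · rw [Nat.mod_eq_of_lt h1, Nat.mod_eq_of_lt h2] at hc; omega
        · rw [Nat.mod_eq_of_lt h1] at hc
          rw [Nat.mod_eq_sub_mod (by omega), Nat.mod_eq_of_lt (by omega)] at hc; omega
        · rw [Nat.mod_eq_of_lt h2] at hc
          rw [Nat.mod_eq_sub_mod (by omega), Nat.mod_eq_of_lt (by omega)] at hc; omega
        · rw [Nat.mod_eq_sub_mod (by omega), Nat.mod_eq_of_lt (by omega),
            Nat.mod_eq_sub_mod (by omega), Nat.mod_eq_of_lt (by omega)] at hc; omega
      rw [if_neg this, mul_zero, Matrix.one_apply_ne h]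
  · intro b _ hb
    have : (b : ℕ) ≠ ((i : ℕ) + 1) % n := fun h => hb (Fin.ext h)
    simp [Pm, Matrix.of_apply, this]
  · intro h; exact absurd (Finset.mem_univ _) h

lemma Pm_pow_pred (n : ℕ) (hn : 2 ≤ n) : Pm n ^ (n - 1) = -(Pm n)ᵀ := by
  have h1 : Pm n ^ (n - 1) * (Pm n * (Pm n)ᵀ) = Pm n ^ (n - 1) := by
    rw [Pm_mul_transpose n (by omega), mul_one]
  have h2 : Pm n ^ (n - 1) * Pm n = Pm n ^ n := by
    rw [← pow_succ]; congr 1; omega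
  calc Pm n ^ (n - 1) = Pm n ^ (n-1) * (Pm n * (Pm n)ᵀ) := h1.symm
    _ = (Pm n ^ (n-1) * Pm n) * (Pm n)ᵀ := by rw [mul_assoc]
    _ = (Pm n ^ n) * (Pm n)ᵀ := by rw [h2]
    _ = -(Pm n)ᵀ := by rw [Pm_pow_n n (by omega)]; simp


lemma LS_eq (n : ℕ) (hn : 3 ≤ n) :
    LSnorm n = (4/3 : ℝ) • 1 - (1/3 : ℝ) • Pm n - (1/3 : ℝ) • (Pm n)ᵀ := by
  ext i j
  have hi := i.isLt; have hj := j.isLt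
  have hmi : ((i : ℕ) + 1) % n = if (i : ℕ) + 1 = n then 0 else (i : ℕ) + 1 := by
    split_ifs with h
    · simp [h]
    · exact Nat.mod_eq_of_lt (by omega)
  have hmj : ((j : ℕ) + 1) % n = if (j : ℕ) + 1 = n then 0 else (j : ℕ) + 1 := by
    split_ifs with h
    · simp [h]
    · exact Nat.mod_eq_of_lt (by omega)
  simp only [LSnorm, Pm, Matrix.sub_apply, Matrix.smul_apply, Matrix.one_apply,
    Matrix.of_apply, Matrix.transpose_apply, smul_eq_mul, Fin.ext_iff, hmi, hmj]
  split_ifs <;> first | omega | (norm_num <;> omega) | norm_num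

noncomputable def Umat (n : ℕ) : Matrix (Fin n) (Fin n) ℝ :=
  ∑ k ∈ Finset.range n, q ^ k • Pm n ^ k

noncomputable def Vmat (n : ℕ) : Matrix (Fin n) (Fin n) ℝ :=
  ∑ k ∈ Finset.range n, q ^ (n - k) • Pm n ^ k

noncomputable def Smat (n : ℕ) : Matrix (Fin n) (Fin n) ℝ := Umat n - Vmat n

lemma tel1 (n : ℕ) (hn : 0 < n) :
    (1 - q • Pm n) * Umat n = (1 + q ^ n) • 1 := by
  have h : (1 - q • Pm n) * Umat n
      = ∑ k ∈ Finset.range n, (q ^ k • Pm n ^ k - q ^ (k+1) • Pm n ^ (k+1)) := by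
    rw [Umat, Finset.mul_sum]
    refine Finset.sum_congr rfl fun k _ => ?_
    rw [sub_mul, one_mul, smul_mul_assoc, Matrix.mul_smul, smul_smul,
      ← pow_succ', ← pow_succ']
  rw [h, Finset.sum_range_sub' (fun k => q ^ k • Pm n ^ k), Pm_pow_n n hn]
  simp only [pow_zero, one_smul, smul_neg]
  rw [add_smul, one_smul, sub_neg_eq_add]

lemma tel2 (n : ℕ) (hn : 0 < n) :
    (Pm n - q • 1) * Vmat n = (-(q * (1 + q ^ n))) • 1 := by
  have h : (Pm n - q • 1) * Vmat n
      = ∑ k ∈ Finset.range n,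
          ((fun k => q ^ (n - k + 1) • Pm n ^ k) (k+1) - (fun k => q ^ (n - k + 1) • Pm n ^ k) k) := by
    rw [Vmat, Finset.mul_sum]
    refine Finset.sum_congr rfl fun k hk => ?_
    have hk' : k < n := Finset.mem_range.mp hk
    have e1 : n - (k+1) + 1 = n - k := by omega
    simp only [e1]
    rw [sub_mul, smul_mul_assoc, one_mul, Matrix.mul_smul, smul_smul, ← pow_succ', ← pow_succ']
  rw [h, Finset.sum_range_sub (fun k => q ^ (n - k + 1) • Pm n ^ k), Pm_pow_n n hn]
  simp only [Nat.sub_self, pow_one, Nat.sub_zero, pow_zero, smul_neg]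
  rw [neg_smul, ← neg_add', ← add_smul]
  congr 1
  ring

lemma fac_helper {n : ℕ} (a b : ℝ) (M : Matrix (Fin n) (Fin n) ℝ) :
    (M - a • 1) * (M - b • 1) = M * M - (a + b) • M + (a * b) • 1 := by
  simp only [mul_sub, sub_mul, smul_mul_assoc, Matrix.mul_smul, one_mul, mul_one,
    smul_smul, add_smul]
  abel

lemma WS (n : ℕ) (hn : 3 ≤ n) :
    ((4 : ℝ) • 1 - Pm n + Pm n ^ (n-1)) * Smat n = ((q⁻¹ - q) * (1 + q ^ n)) • 1 := by
  set P := Pm n with hP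
  have hn0 : 0 < n := by omega
  have hPn : P ^ n = -1 := Pm_pow_n n hn0
  have hP1 : P ^ (n-1) * P = P ^ n := by rw [← pow_succ]; congr 1; omega
  -- W = P^(n-1) * (P*P - 4•P + 1)
  have hW : (4 : ℝ) • 1 - P + P ^ (n-1) = P ^ (n-1) * (P * P - (4:ℝ) • P + 1) := by
    rw [mul_add, mul_sub, mul_one, Matrix.mul_smul, ← mul_assoc, hP1, hPn]
    rw [show (-1 : Matrix (Fin n) (Fin n) ℝ) * P = -P by simp]
    rw [smul_neg]
    abel
  have hq : q ≠ 0 := q_ne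
  have hfac : P * P - (4:ℝ) • P + 1 = (P - q • 1) * (P - q⁻¹ • 1) := by
    rw [fac_helper]
    rw [q_add_inv, mul_inv_cancel₀ hq, one_smul]
  have hcomm : (P - q • 1) * (P - q⁻¹ • 1) = (P - q⁻¹ • 1) * (P - q • 1) := by
    rw [fac_helper, fac_helper, add_comm q⁻¹ q, mul_comm q⁻¹ q]
  -- (P - q⁻¹•1) = (-q⁻¹) • (1 - q•P)
  have hresc : P - q⁻¹ • 1 = (-q⁻¹) • (1 - q • P) := by
    rw [smul_sub, smul_smul, neg_smul,
      show -q⁻¹ * q = -1 by field_simp, neg_one_smul]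
    abel
  have hU : (P - q⁻¹ • 1) * Umat n = (-q⁻¹ * (1 + q ^ n)) • 1 := by
    rw [hresc, smul_mul_assoc, tel1 n hn0, smul_smul]
  have hV : (P - q • 1) * Vmat n = (-(q * (1 + q ^ n))) • 1 := tel2 n hn0
  have hXYU : ((P - q • 1) * (P - q⁻¹ • 1)) * Umat n = (-q⁻¹ * (1 + q ^ n)) • (P - q • 1) := by
    rw [mul_assoc, hU, Matrix.mul_smul, mul_one]
  have hXYV : ((P - q • 1) * (P - q⁻¹ • 1)) * Vmat n = (-(q * (1 + q ^ n))) • (P - q⁻¹ • 1) := by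
    rw [hcomm, mul_assoc, hV, Matrix.mul_smul, mul_one]
  have hdiff : ((P - q • 1) * (P - q⁻¹ • 1)) * Smat n = ((q - q⁻¹) * (1 + q ^ n)) • P := by
    rw [Smat, mul_sub, hXYU, hXYV]
    rw [smul_sub, smul_sub, smul_smul, smul_smul]
    rw [show -q⁻¹ * (1 + q ^ n) * q = -(1 + q^n) * (q⁻¹ * q) by ring,
        show -(q * (1 + q ^ n)) * q⁻¹ = -(1 + q^n) * (q * q⁻¹) by ring,
        mul_inv_cancel₀ hq, inv_mul_cancel₀ hq]
    rw [sub_sub_sub_cancel_right, ← sub_smul]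
    congr 1
    ring
  calc ((4 : ℝ) • 1 - P + P ^ (n-1)) * Smat n
      = P ^ (n-1) * (((P - q • 1) * (P - q⁻¹ • 1)) * Smat n) := by
        rw [hW, hfac, mul_assoc]
    _ = ((q - q⁻¹) * (1 + q ^ n)) • (P ^ (n-1) * P) := by
        rw [hdiff, Matrix.mul_smul]
    _ = ((q⁻¹ - q) * (1 + q ^ n)) • 1 := by
        rw [hP1, hPn, smul_neg, ← neg_smul]
        congr 1
        ring

lemma m_eq : q⁻¹ - q = 2 * Real.sqrt 3 := by
  rw [q_inv]; simp only [q]; ring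

lemma m_pos (n : ℕ) : 0 < (q⁻¹ - q) * (1 + q ^ n) := by
  apply mul_pos
  · rw [m_eq]
    have := Real.sqrt_pos.mpr (by norm_num : (0:ℝ) < 3)
    linarith
  · have := pow_pos q_pos n
    linarith

lemma LS_eq' (n : ℕ) (hn : 3 ≤ n) :
    LSnorm n = (1/3 : ℝ) • ((4 : ℝ) • 1 - Pm n + Pm n ^ (n-1)) := by
  rw [LS_eq n hn, Pm_pow_pred n (by omega), smul_add, smul_sub, smul_smul, smul_neg]
  norm_num
  abel

lemma LS_mul_inv (n : ℕ) (hn : 3 ≤ n) :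
    LSnorm n * ((3 * ((q⁻¹ - q) * (1 + q ^ n))⁻¹) • Smat n) = 1 := by
  have hm := m_pos n
  rw [LS_eq' n hn, smul_mul_assoc, Matrix.mul_smul, smul_smul, WS n hn, smul_smul]
  rw [show (1:ℝ) / 3 * (3 * ((q⁻¹ - q) * (1 + q ^ n))⁻¹) * ((q⁻¹ - q) * (1 + q ^ n))
      = ((q⁻¹ - q) * (1 + q ^ n))⁻¹ * ((q⁻¹ - q) * (1 + q ^ n)) by ring]
  rw [inv_mul_cancel₀ hm.ne', one_smul]

lemma trace_smat (n : ℕ) (hn : 3 ≤ n) :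
    (Smat n).trace = (n : ℝ) * (1 - q ^ n) := by
  have hU : (Umat n).trace = (n : ℝ) := by
    rw [Umat, Matrix.trace_sum]
    rw [Finset.sum_eq_single 0]
    · simp [Matrix.trace_one]
    · intro k hk hk0
      rw [Matrix.trace_smul, trace_Pm_pow n k (by omega) (Finset.mem_range.mp hk)]
      simp
    · intro h; exact absurd (Finset.mem_range.mpr (by omega)) h
  have hV : (Vmat n).trace = (n : ℝ) * q ^ n := by
    rw [Vmat, Matrix.trace_sum]
    rw [Finset.sum_eq_single 0]
    · simp [Matrix.trace_one, mul_comm]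
    · intro k hk hk0
      rw [Matrix.trace_smul, trace_Pm_pow n k (by omega) (Finset.mem_range.mp hk)]
      simp
    · intro h; exact absurd (Finset.mem_range.mpr (by omega)) h
  rw [Smat, Matrix.trace_sub, hU, hV]
  ring

lemma LS_posdef (n : ℕ) (hn : 3 ≤ n) (hL : (LSnorm n).IsHermitian) : (LSnorm n).PosDef := by
  refine Matrix.PosDef.of_dotProduct_mulVec_pos hL fun x hx => ?_
  have hn0 : 0 < n := by omega
  have hPtP : (Pm n)ᵀ * Pm n = 1 := by
    rw [mul_eq_one_comm]
    exact Pm_mul_transpose n hn0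
  set y := Pm n *ᵥ x with hy
  have hyy : y ⬝ᵥ y = x ⬝ᵥ x := by
    calc y ⬝ᵥ y = y ⬝ᵥ (Pm n *ᵥ x) := rfl
      _ = (y ᵥ* Pm n) ⬝ᵥ x := by rw [Matrix.dotProduct_mulVec]
      _ = ((Pm n)ᵀ *ᵥ y) ⬝ᵥ x := by rw [← Matrix.vecMul_transpose, Matrix.transpose_transpose]
      _ = (((Pm n)ᵀ * Pm n) *ᵥ x) ⬝ᵥ x := by rw [hy, Matrix.mulVec_mulVec]
      _ = x ⬝ᵥ x := by rw [hPtP, Matrix.one_mulVec]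
  have hform : star x ⬝ᵥ (LSnorm n *ᵥ x) = 4/3 * (x ⬝ᵥ x) - 2/3 * (x ⬝ᵥ y) := by
    rw [star_trivial, LS_eq n hn]
    rw [Matrix.sub_mulVec, Matrix.sub_mulVec, Matrix.smul_mulVec,
      Matrix.smul_mulVec, Matrix.smul_mulVec, Matrix.one_mulVec]
    rw [dotProduct_sub, dotProduct_sub, dotProduct_smul, dotProduct_smul, dotProduct_smul]
    have hxPt : x ⬝ᵥ ((Pm n)ᵀ *ᵥ x) = x ⬝ᵥ y := by
      rw [Matrix.dotProduct_mulVec, Matrix.vecMul_transpose, dotProduct_comm]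
    rw [hxPt]
    simp only [smul_eq_mul]
    ring
  have hsq : 0 ≤ (x - y) ⬝ᵥ (x - y) := by
    unfold dotProduct
    exact Finset.sum_nonneg fun i _ => mul_self_nonneg _
  have hexp : (x - y) ⬝ᵥ (x - y) = 2 * (x ⬝ᵥ x) - 2 * (x ⬝ᵥ y) := by
    rw [sub_dotProduct, dotProduct_sub, dotProduct_sub, hyy, dotProduct_comm y x]
    ring
  have hxy : x ⬝ᵥ y ≤ x ⬝ᵥ x := by
    rw [hexp] at hsq; linarith
  have hxx : 0 < x ⬝ᵥ x := by
    unfold dotProduct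
    obtain ⟨i, hi⟩ := Function.ne_iff.mp hx
    apply Finset.sum_pos' (fun j _ => mul_self_nonneg _)
    exact ⟨i, Finset.mem_univ i, mul_self_pos.mpr hi⟩
  rw [hform]
  linarith

lemma sum_inv_eq_trace (n : ℕ) (hL : (LSnorm n).IsHermitian)
    (hpos : ∀ i, hL.eigenvalues i ≠ 0)
    (B : Matrix (Fin n) (Fin n) ℝ) (hB : LSnorm n * B = 1) :
    ∑ i, (hL.eigenvalues i)⁻¹ = B.trace := by
  classical
  set V : Matrix (Fin n) (Fin n) ℝ := (hL.eigenvectorUnitary : Matrix (Fin n) (Fin n) ℝ) with hV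
  have hVsV : star V * V = 1 := by
    exact Matrix.mem_unitaryGroup_iff'.mp (hL.eigenvectorUnitary).2
  have hVVs : V * star V = 1 := by
    exact Matrix.mem_unitaryGroup_iff.mp (hL.eigenvectorUnitary).2
  set d : Fin n → ℝ := hL.eigenvalues with hd
  have hdiag : star V * LSnorm n * V = Matrix.diagonal d := by
    have := hL.conjStarAlgAut_star_eigenvectorUnitary
    rw [Unitary.conjStarAlgAut_star_apply] at this
    rw [← hV] at this
    convert this using 2
    all_goals rfl
  set E := star V * B * V with hE
  have hDE : Matrix.diagonal d * E = 1 := by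
    calc Matrix.diagonal d * E = (star V * LSnorm n * V) * (star V * B * V) := by
          rw [hdiag]
      _ = star V * (LSnorm n * ((V * star V) * B)) * V := by
          simp only [Matrix.mul_assoc]
      _ = star V * (LSnorm n * B) * V := by rw [hVVs, one_mul]
      _ = star V * V := by rw [hB, mul_one]
      _ = 1 := hVsV
  have hD2 : Matrix.diagonal d * Matrix.diagonal (fun i => (d i)⁻¹) = 1 := by
    rw [Matrix.diagonal_mul_diagonal]
    rw [show (fun i => d i * (d i)⁻¹) = fun _ => (1:ℝ) from
      funext fun i => mul_inv_cancel₀ (hpos i)]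
    exact Matrix.diagonal_one
  have hEeq : E = Matrix.diagonal (fun i => (d i)⁻¹) := by
    rw [← Matrix.inv_eq_right_inv hDE, Matrix.inv_eq_right_inv hD2]
  have htr : E.trace = B.trace := by
    calc E.trace = ((star V * B) * V).trace := by rw [hE]
      _ = (V * (star V * B)).trace := Matrix.trace_mul_comm _ _
      _ = ((V * star V) * B).trace := by rw [Matrix.mul_assoc]
      _ = B.trace := by rw [hVVs, one_mul]
  rw [← htr, hEeq, Matrix.trace_diagonal]

end Stmt15Aux

open Stmt15Aux in
theorem stmt15 (n : ℕ) (hn : 3 ≤ n) (hL : (LSnorm n).IsHermitian) :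
    (∀ i, 0 < hL.eigenvalues i) ∧
      ∑ i, (hL.eigenvalues i)⁻¹ =
        Real.sqrt 3 * n / 2 *
          (((2 + Real.sqrt 3) ^ n - (2 - Real.sqrt 3) ^ n) /
            ((2 + Real.sqrt 3) ^ n + (2 - Real.sqrt 3) ^ n + 2)) := by
  have hpd := LS_posdef n hn hL
  refine ⟨fun i => hpd.eigenvalues_pos i, ?_⟩
  have hB := LS_mul_inv n hn
  have h1 := sum_inv_eq_trace n hL (fun i => (hpd.eigenvalues_pos i).ne') _ hB
  rw [h1, Matrix.trace_smul, trace_smat n hn, smul_eq_mul, m_eq]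
  have hs : Real.sqrt 3 ^ 2 = 3 := sqrt3_sq
  have hs0 : 0 < Real.sqrt 3 := Real.sqrt_pos.mpr (by norm_num)
  have hs2 : Real.sqrt 3 < 2 := sqrt3_lt_two
  have hq : q = 2 - Real.sqrt 3 := rfl
  rw [hq]
  set s := Real.sqrt 3 with hsdef
  set X := (2 + s) ^ n with hX
  set Y := (2 - s) ^ n with hY
  have hXY : X * Y = 1 := by
    rw [hX, hY, ← mul_pow, show (2 + s) * (2 - s) = 4 - s ^ 2 by ring, hs]
    norm_num
  have hYpos : 0 < Y := pow_pos (by linarith) n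
  have hXpos : 0 < X := pow_pos (by linarith) n
  have h1Y : (0:ℝ) < 1 + Y := by linarith
  have hden : (0:ℝ) < X + Y + 2 := by linarith
  have hXY2 : (2 - s) ^ n * (2 + s) ^ n = 1 := by
    rw [← mul_pow, show (2 - s) * (2 + s) = 4 - s ^ 2 by ring, hs]
    norm_num
  field_simp
  linear_combination (-(1 + Y) * (X - Y)) * hs + (-6) * hXY
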